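/- Let H be a separable complex Hilbert space, T ∈ B(H) a positive injective operator, and (e_n)_{n∈ℤ} an orthonormal family in H such that each e_n belongs to the range of T and Σ_{n∈ℤ} n² ‖T e_n‖² < ∞. In the Hilbert space ℓ²(ℤ; H), let ξ be the element ξ(n) = n · T e_n. For S ∈ B(ℓ²(ℤ)), let id⊗S ∈ B(ℓ²(ℤ; H)) be the amplification of S, determined by ((id⊗S)f)(j) = Σ_{n∈ℤ} ⟨δ_j, S δ_n⟩ f(n) for f ∈ ℓ²(ℤ; H), and let T⊗id ∈ B(ℓ²(ℤ; H)) act pointwise by ((T⊗id)f)(j) = T(f(j)). Then (id⊗S)ξ belongs to the range of T⊗id if and only if Σ_{n∈ℤ} n² ‖S δ_n‖² < ∞. -/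

import Mathlib

noncomputable section

open MeasureTheory Filter Topology Pointwise

namespace Evan

variable {𝕜 : Type} [RCLike 𝕜]
variable {G : Type} [Group G] [TopologicalSpace G] [IsTopologicalGroup G]
variable {H : Type} [NormedAddCommGroup H] [InnerProductSpace 𝕜 H] [CompleteSpace H]

/-- A continuous unitary (orthogonal, when `𝕜 = ℝ`) representation of `G` on `H`:
a homomorphism into the unitary group which is continuous for the topology
of pointwise norm convergence. -/
structure IsUnitaryRep (π : G →* (H →L[𝕜] H)) : Prop where
  mem_unitary : ∀ g, π g ∈ unitary (H →L[𝕜] H)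
  cont : ∀ ξ : H, Continuous fun g => π g ξ

/-- The commutant `π(G)'` of a representation. -/
def commutant (π : G →* (H →L[𝕜] H)) : Set (H →L[𝕜] H) :=
  {T | ∀ g, T * π g = π g * T}

/-- The bicommutant `π(G)''`, i.e. the von Neumann algebra generated by `π(G)`. -/
def bicommutant (π : G →* (H →L[𝕜] H)) : Set (H →L[𝕜] H) :=
  Set.centralizer (commutant π)

/-- Closure of a set of operators in the weak operator topology. -/
def wotClosure (𝕜 : Type) {H : Type} [RCLike 𝕜] [NormedAddCommGroup H]
    [InnerProductSpace 𝕜 H] (S : Set (H →L[𝕜] H)) : Set (H →L[𝕜] H) :=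
  (ContinuousLinearMapWOT.ofCLM : (H →L[𝕜] H) → H →WOT[𝕜] H) ⁻¹'
    closure ((ContinuousLinearMapWOT.ofCLM : (H →L[𝕜] H) → H →WOT[𝕜] H) '' S)

/-- A continuous `1`-cocycle for the representation `π`. -/
def IsCocycle (π : G →* (H →L[𝕜] H)) (c : G → H) : Prop :=
  Continuous c ∧ ∀ g h : G, c (g * h) = c g + π g (c h)

/-- A coboundary: `c g = ξ - π g ξ` for some `ξ`. -/
def IsCoboundary (π : G →* (H →L[𝕜] H)) (c : G → H) : Prop :=
  ∃ ξ : H, ∀ g : G, c g = ξ - π g ξ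

/-- `c` is an almost coboundary: it lies in the closure of the set of coboundaries for
the topology of uniform convergence on compact subsets of `G`. -/
def IsAlmostCoboundary (π : G →* (H →L[𝕜] H)) (c : G → H) : Prop :=
  ∀ Q : Set G, IsCompact Q → ∀ ε : ℝ, 0 < ε → ∃ ξ : H, ∀ g ∈ Q, ‖c g - (ξ - π g ξ)‖ ≤ ε

/-- The reduction ideal `I(c) = {T ∈ π(G)' : T·c ∈ B¹(G,π)}`. -/
def reductionIdeal (π : G →* (H →L[𝕜] H)) (c : G → H) : Set (H →L[𝕜] H) :=
  {T | T ∈ commutant π ∧ IsCoboundary π fun g => T (c g)}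

/-- `c` is evanescent: `I(c)` is dense in `π(G)'` for the weak operator topology. -/
def IsEvanescent (π : G →* (H →L[𝕜] H)) (c : G → H) : Prop :=
  commutant π ⊆ wotClosure 𝕜 (reductionIdeal π c)

/-- `c` is irreducible: `I(c) = {0}`. -/
def IsIrreducibleCocycle (π : G →* (H →L[𝕜] H)) (c : G → H) : Prop :=
  reductionIdeal π c = {0}

/-- `π` has almost invariant vectors. -/
def HasAlmostInvariantVectors (π : G →* (H →L[𝕜] H)) : Prop :=
  ∀ Q : Set G, IsCompact Q → ∀ ε : ℝ, 0 < ε →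
    ∃ ξ : H, ‖ξ‖ = 1 ∧ ∀ g ∈ Q, ‖π g ξ - ξ‖ ≤ ε

/-- `π` is irreducible: the only closed invariant subspaces are `⊥` and `⊤`. -/
def IsIrreducibleRep (π : G →* (H →L[𝕜] H)) : Prop :=
  ∀ K : Submodule 𝕜 H, IsClosed (K : Set H) → (∀ g : G, ∀ x ∈ K, π g x ∈ K) →
    K = ⊥ ∨ K = ⊤

/-- A projection: a self-adjoint idempotent. -/
def IsProjection (p : H →L[𝕜] H) : Prop :=
  IsSelfAdjoint p ∧ p * p = p

/-- The reduction ideal of the projected cocycle `p·c`, viewed as a cocycle for the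
subrepresentation of `π` on `pH`, whose commutant is identified with the corner
`p π(G)' p` (a von Neumann algebra with unit `p`). -/
def projReductionIdeal (π : G →* (H →L[𝕜] H)) (c : G → H) (p : H →L[𝕜] H) :
    Set (H →L[𝕜] H) :=
  {T | T ∈ commutant π ∧ p * T = T ∧ T * p = T ∧
    ∃ ξ : H, p ξ = ξ ∧ ∀ g : G, T (c g) = ξ - π g ξ}

/-- The projected cocycle `p·c` is evanescent: its reduction ideal is dense, in the weak
operator topology, in the commutant of the subrepresentation on `pH` (the corner
`p π(G)' p`). -/
def ProjIsEvanescent (π : G →* (H →L[𝕜] H)) (c : G → H) (p : H →L[𝕜] H) : Prop :=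
  {T | T ∈ commutant π ∧ p * T = T ∧ T * p = T} ⊆
    wotClosure 𝕜 (projReductionIdeal π c p)

/-- The projected cocycle `p·c` is irreducible: its reduction ideal is `{0}`. -/
def ProjIsIrreducible (π : G →* (H →L[𝕜] H)) (c : G → H) (p : H →L[𝕜] H) : Prop :=
  projReductionIdeal π c p = {0}

/-- `G` is weak identity excluding (WIE): every irreducible unitary representation of `G`
on a separable complex Hilbert space that has almost invariant vectors is trivial. -/
def IsWIE (G : Type) [Group G] [TopologicalSpace G] [IsTopologicalGroup G] : Prop :=
  ∀ (H : Type) (_ : NormedAddCommGroup H) (_ : InnerProductSpace ℂ H)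
    (_ : CompleteSpace H) (_ : TopologicalSpace.SeparableSpace H)
    (π : G →* (H →L[ℂ] H)), IsUnitaryRep π → IsIrreducibleRep π →
      HasAlmostInvariantVectors π → ∀ g : G, π g = 1

/-- The range criterion for amplified vectors: with
`ξ = Σ n·(T eₙ) ⊗ δₙ ∈ ℓ²(ℤ;H)`, the vector `(id ⊗ S) ξ` lies in the range of `T ⊗ id`
iff `Σ n² ‖S δₙ‖² < ∞`. -/
private lemma lp_norm_sq {α : Type} {E : α → Type} [∀ i, NormedAddCommGroup (E i)]
    (f : lp E 2) : ‖f‖ ^ 2 = ∑' i, ‖f i‖ ^ 2 := by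
  have h := lp.norm_rpow_eq_tsum (p := 2) (by norm_num) f
  simpa using h

private lemma lp_summable_sq {α : Type} {E : α → Type} [∀ i, NormedAddCommGroup (E i)]
    (f : lp E 2) : Summable fun i => ‖f i‖ ^ 2 := by
  have h := (lp.memℓp f).summable (p := 2) (by norm_num)
  simpa using h

private lemma memℓp_two_of_sq {α : Type} {E : α → Type} [∀ i, NormedAddCommGroup (E i)]
    {f : ∀ i, E i} (h : Summable fun i => ‖f i‖ ^ 2) : Memℓp f 2 := by
  apply memℓp_gen
  simpa using h

private lemma tonelli_swap {F : ℤ → ℤ → ℝ} (h0 : ∀ a b, 0 ≤ F a b)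
    (h1 : ∀ a, Summable (F a)) (h2 : Summable fun a => ∑' b, F a b) :
    (∀ b, Summable fun a => F a b) ∧ Summable fun b => ∑' a, F a b := by
  have hprod : Summable fun p : ℤ × ℤ => F p.1 p.2 :=
    (summable_prod_of_nonneg fun p => h0 p.1 p.2).mpr ⟨h1, h2⟩
  have hswap : Summable fun p : ℤ × ℤ => F p.2 p.1 := hprod.prod_symm
  exact (summable_prod_of_nonneg (f := fun p : ℤ × ℤ => F p.2 p.1) fun p => h0 p.2 p.1).mp hswap

theorem amplified_range_criterion
    (H : Type) [NormedAddCommGroup H] [InnerProductSpace ℂ H] [CompleteSpace H]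
    [TopologicalSpace.SeparableSpace H]
    (T : H →L[ℂ] H) (hTpos : T.IsPositive) (hTinj : Function.Injective T)
    (e : ℤ → H) (he : Orthonormal ℂ e) (heran : ∀ n : ℤ, e n ∈ Set.range T)
    (hesum : Summable fun n : ℤ => (n : ℝ) ^ 2 * ‖T (e n)‖ ^ 2)
    (ξ : lp (fun _ : ℤ => H) 2)
    (hξ : ∀ n : ℤ, ξ n = (n : ℂ) • T (e n))
    (S : lp (fun _ : ℤ => ℂ) 2 →L[ℂ] lp (fun _ : ℤ => ℂ) 2)
    (AS : lp (fun _ : ℤ => H) 2 →L[ℂ] lp (fun _ : ℤ => H) 2)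
    (hAS : ∀ (f : lp (fun _ : ℤ => H) 2) (j : ℤ),
      AS f j = ∑' n : ℤ, (inner ℂ (lp.single 2 j (1 : ℂ)) (S (lp.single 2 n 1)) : ℂ) • f n)
    (Tid : lp (fun _ : ℤ => H) 2 →L[ℂ] lp (fun _ : ℤ => H) 2)
    (hTid : ∀ (f : lp (fun _ : ℤ => H) 2) (j : ℤ), Tid f j = T (f j)) :
    AS ξ ∈ Set.range Tid ↔
      Summable fun n : ℤ => (n : ℝ) ^ 2 * ‖S (lp.single 2 n 1)‖ ^ 2 := by
  classical
  set c : ℤ → ℤ → ℂ := fun n j => S (lp.single 2 n 1) j with hc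
  have hinner1 : ∀ j n : ℤ, (inner ℂ (lp.single 2 j (1 : ℂ)) (S (lp.single 2 n 1)) : ℂ) = c n j := by
    intro j n
    rw [lp.inner_single_left]
    simp [hc, RCLike.inner_apply]
  have hASj : ∀ j, AS ξ j = ∑' n : ℤ, ((n : ℂ) * c n j) • T (e n) := by
    intro j
    rw [hAS]
    refine tsum_congr fun n => ?_
    rw [hinner1, hξ, smul_smul, mul_comm]
  have hnormc : ∀ n j : ℤ, ‖(n : ℂ) * c n j‖ ^ 2 = (n : ℝ) ^ 2 * ‖c n j‖ ^ 2 := by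
    intro n j
    rw [norm_mul, mul_pow]
    congr 1
    simp [sq_abs]
  have htarget : ∀ n : ℤ, (n : ℝ) ^ 2 * ‖S (lp.single 2 n 1)‖ ^ 2
      = ∑' j : ℤ, ‖(n : ℂ) * c n j‖ ^ 2 := by
    intro n
    rw [lp_norm_sq (S (lp.single 2 n 1)), ← tsum_mul_left]
    exact tsum_congr fun j => (hnormc n j).symm
  constructor
  · rintro ⟨f, hf⟩
    -- column square-summability of c via the adjoint
    have hcadj : ∀ j, Summable fun n => ‖c n j‖ ^ 2 := by
      intro j
      have hkey : ∀ n, ‖c n j‖ = ‖(ContinuousLinearMap.adjoint S) (lp.single 2 j 1) n‖ := by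
        intro n
        have h1 : c n j = (inner ℂ (lp.single 2 j (1 : ℂ)) (S (lp.single 2 n 1)) : ℂ) :=
          (hinner1 j n).symm
        rw [h1, ← ContinuousLinearMap.adjoint_inner_left, lp.inner_single_right]
        simp [RCLike.inner_apply]
      refine (lp_summable_sq ((ContinuousLinearMap.adjoint S) (lp.single 2 j 1))).congr fun n => ?_
      rw [hkey]
    have hsummand : ∀ j, Summable fun n : ℤ => ((n : ℂ) * c n j) • T (e n) := by
      intro j
      refine Summable.of_norm ?_
      refine Summable.of_nonneg_of_le (fun n => norm_nonneg _) (fun n => ?_)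
        (((hcadj j).add hesum))
      rw [norm_smul, norm_mul]
      have h1 : ‖(n : ℂ)‖ = |(n : ℝ)| := by simp
      rw [h1]
      have hc0 : (0:ℝ) ≤ ‖c n j‖ := norm_nonneg _
      have ht0 : (0:ℝ) ≤ ‖T (e n)‖ := norm_nonneg _
      have ha0 : (0:ℝ) ≤ |(n : ℝ)| := abs_nonneg _
      have hsq : (|(n : ℝ)| * ‖T (e n)‖) ^ 2 = (n : ℝ) ^ 2 * ‖T (e n)‖ ^ 2 := by
        rw [mul_pow, sq_abs]
      nlinarith [sq_nonneg (‖c n j‖ - |(n : ℝ)| * ‖T (e n)‖), mul_nonneg (mul_nonneg ha0 hc0) ht0]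
    choose v hv using heran
    have hsym := ContinuousLinearMap.isSelfAdjoint_iff_isSymmetric.mp hTpos.isSelfAdjoint
    have hfj : ∀ j, T (f j) = ∑' n : ℤ, ((n : ℂ) * c n j) • T (e n) := by
      intro j
      have h1 := hTid f j
      rw [hf] at h1
      rw [← h1, hASj]
    have hinner_fj : ∀ j m : ℤ, (inner ℂ (e m) (f j) : ℂ) = (m : ℂ) * c m j := by
      intro j m
      have h1 : (inner ℂ (e m) (f j) : ℂ) = inner ℂ (v m) (T (f j)) := by
        rw [← hv m]; exact hsym (v m) (f j)
      have h2 : (inner ℂ (v m) (T (f j)) : ℂ)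
          = ∑' n : ℤ, ((n : ℂ) * c n j) * inner ℂ (v m) (T (e n)) := by
        rw [hfj j]
        have h2' := (innerSL ℂ (v m)).map_tsum (hsummand j)
        simp only [innerSL_apply_apply] at h2'
        rw [h2']
        exact tsum_congr fun n => by rw [inner_smul_right]
      have h3 : ∀ n, (inner ℂ (v m) (T (e n)) : ℂ) = if m = n then 1 else 0 := by
        intro n
        have h := (hsym (v m) (e n)).symm
        simp only [ContinuousLinearMap.coe_coe] at h
        rw [h, hv m]
        exact orthonormal_iff_ite.mp he m n
      rw [h1, h2]
      calc (∑' n : ℤ, ((n : ℂ) * c n j) * inner ℂ (v m) (T (e n)))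
          = ∑' n, (if n = m then (m : ℂ) * c m j else 0) := by
            refine tsum_congr fun n => ?_
            rw [h3]
            by_cases hnm : n = m
            · subst hnm; simp
            · rw [if_neg hnm, if_neg (fun h : m = n => hnm h.symm), mul_zero]
        _ = (m : ℂ) * c m j := tsum_ite_eq m _
    have hbes : ∀ j, Summable fun m : ℤ => ‖(m : ℂ) * c m j‖ ^ 2 := by
      intro j
      have h := he.inner_products_summable (x := f j)
      refine h.congr fun m => ?_
      rw [hinner_fj j m]
    have hbnd : ∀ j, (∑' m : ℤ, ‖(m : ℂ) * c m j‖ ^ 2) ≤ ‖f j‖ ^ 2 := by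
      intro j
      have h := he.tsum_inner_products_le (x := f j)
      calc (∑' m : ℤ, ‖(m : ℂ) * c m j‖ ^ 2)
          = ∑' m : ℤ, ‖(inner ℂ (e m) (f j) : ℂ)‖ ^ 2 := by
            refine tsum_congr fun m => ?_; rw [hinner_fj j m]
        _ ≤ ‖f j‖ ^ 2 := h
    have h2 : Summable fun j => ∑' m : ℤ, ‖(m : ℂ) * c m j‖ ^ 2 :=
      Summable.of_nonneg_of_le (fun j => tsum_nonneg fun m => by positivity) hbnd
        (lp_summable_sq f)
    have h3 := (tonelli_swap (F := fun j m => ‖(m : ℂ) * c m j‖ ^ 2)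
      (fun a b => by positivity) hbes h2).2
    exact h3.congr fun n => (htarget n).symm
  · intro hs
    have hsum_nj : ∀ n : ℤ, Summable fun j : ℤ => ‖(n : ℂ) * c n j‖ ^ 2 := by
      intro n
      refine ((lp_summable_sq (S (lp.single 2 n 1))).mul_left ((n : ℝ) ^ 2)).congr fun j => ?_
      rw [hnormc]
    have hs' : Summable fun n : ℤ => ∑' j : ℤ, ‖(n : ℂ) * c n j‖ ^ 2 :=
      hs.congr fun n => htarget n
    obtain ⟨hjs, hmarg⟩ := tonelli_swap (F := fun n j => ‖(n : ℂ) * c n j‖ ^ 2)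
      (fun a b => by positivity) hsum_nj hs'
    set b : ℤ → lp (fun _ : ℤ => ℂ) 2 :=
      fun j => ⟨fun n : ℤ => (n : ℂ) * c n j, memℓp_two_of_sq (hjs j)⟩ with hbdef
    have OF := he.orthogonalFamily
    set g : ℤ → H := fun j => OF.linearIsometry (b j) with hg
    have hgsum : ∀ j, HasSum (fun n : ℤ => ((n : ℂ) * c n j) • e n) (g j) := by
      intro j
      have h := OF.hasSum_linearIsometry (b j)
      simpa [LinearIsometry.toSpanSingleton_apply] using h
    have hgn : ∀ j, ‖g j‖ ^ 2 = ∑' n : ℤ, ‖(n : ℂ) * c n j‖ ^ 2 := by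
      intro j
      rw [hg]
      rw [OF.linearIsometry.norm_map (b j)]
      exact lp_norm_sq (b j)
    have hmem : Memℓp g 2 := memℓp_two_of_sq (hmarg.congr fun j => (hgn j).symm)
    refine ⟨⟨g, hmem⟩, ?_⟩
    apply lp.ext
    funext j
    have h1 : Tid ⟨g, hmem⟩ j = T (g j) := hTid _ j
    have h2 : HasSum (fun n : ℤ => ((n : ℂ) * c n j) • T (e n)) (T (g j)) := by
      have h := (hgsum j).mapL T
      simpa only [_root_.map_smul] using h
    show Tid ⟨g, hmem⟩ j = AS ξ j
    rw [h1, hASj j, ← h2.tsum_eq]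

end Evan
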